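/- Let p be a prime, α ∈ ℂ_p with |α|_p = 1, F ∈ ℂ_p[X]∖{0} with F(α) = 0, and ζ ∈ ℂ_p a root of unity of order p^k·m with p ∤ m. Let M be a nonempty subset of Gal(ℚ(ζ)/ℚ) with F(σ(ζ)) ≠ 0 for all σ ∈ M. Then 0 ≥ Σ_{σ∈M} log|σ(ζ) - α|_p ≥ -(c(F) + k·log p), where c(F) = -log(inf(F)/|F|_p) and inf(F) = inf{|F(ξ)|_p : ξ a root of unity with F(ξ) ≠ 0}. -/

import Mathlib

/-- The `p`-adic Gauss norm of a polynomial: the maximum of the norms of its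
coefficients. -/
noncomputable def gaussNorm {K : Type*} [NontriviallyNormedField K] (F : Polynomial K) : ℝ :=
  ((F.support.sup fun i => ‖F.coeff i‖₊ : NNReal) : ℝ)

/-- `inf(F)`: the infimum of `|F(ξ)|_p` over roots of unity `ξ` with `F(ξ) ≠ 0`. -/
noncomputable def infF {K : Type*} [NontriviallyNormedField K] (F : Polynomial K) : ℝ :=
  sInf {r : ℝ | ∃ ξ : K, IsOfFinOrder ξ ∧ F.eval ξ ≠ 0 ∧ r = ‖F.eval ξ‖}

/-- `c(F) = -log(inf(F)/|F|_p)`. -/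
noncomputable def cF {K : Type*} [NontriviallyNormedField K] (F : Polynomial K) : ℝ :=
  -Real.log (infF F / gaussNorm F)


section TateVolochLemmas

open Polynomial IsUltrametricDist

set_option linter.unusedSectionVars false

variable {K : Type*} [NontriviallyNormedField K] [IsUltrametricDist K]

lemma tv_norm_sub_le_max (a b : K) : ‖a - b‖ ≤ max ‖a‖ ‖b‖ := by
  rw [sub_eq_add_neg]
  simpa using norm_add_le_max a (-b)

/-- norm of an element of finite order is 1 -/
lemma tv_norm_finOrder {ξ : K} (h : IsOfFinOrder ξ) : ‖ξ‖ = 1 := by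
  have hn : 0 < orderOf ξ := h.orderOf_pos
  have h1 : ‖ξ‖ ^ orderOf ξ = 1 := by
    rw [← norm_pow, pow_orderOf_eq_one, norm_one]
  rcases lt_trichotomy ‖ξ‖ 1 with hlt | heq | hgt
  · exact absurd h1 (by nlinarith [pow_lt_one₀ (norm_nonneg ξ) hlt hn.ne'])
  · exact heq
  · exact absurd h1 (by nlinarith [one_lt_pow₀ hgt hn.ne'])

lemma tv_finOrder_ne_zero {ξ : K} (h : IsOfFinOrder ξ) : ξ ≠ 0 := by
  intro h0
  have := tv_norm_finOrder h
  simp [h0] at this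

/-- geometric sum bound -/
lemma tv_geom_bound {η : K} (hη : ‖η‖ = 1) (t : ℕ) : ‖1 - η ^ t‖ ≤ ‖1 - η‖ := by
  have h1 : (∑ j ∈ Finset.range t, η ^ j) * (η - 1) = η ^ t - 1 := geom_sum_mul η t
  have h2 : (∑ j ∈ Finset.range t, η ^ j) * (1 - η) = 1 - η ^ t := by linear_combination -h1
  have h3 : ‖∑ j ∈ Finset.range t, η ^ j‖ ≤ 1 :=
    norm_sum_le_of_forall_le_of_nonneg zero_le_one fun j _ => by simp [norm_pow, hη]
  calc ‖1 - η ^ t‖ = ‖∑ j ∈ Finset.range t, η ^ j‖ * ‖1 - η‖ := by rw [← h2, norm_mul]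
    _ ≤ 1 * ‖1 - η‖ := mul_le_mul_of_nonneg_right h3 (norm_nonneg _)
    _ = ‖1 - η‖ := one_mul _

lemma tv_norm_coprime {p : ℕ} (hp : p.Prime) (hpnorm : ‖(p : K)‖ = (p : ℝ)⁻¹)
    {m : ℕ} (hpm : ¬ p ∣ m) : ‖(m : K)‖ = 1 := by
  have hcop : Nat.Coprime p m := (Nat.Prime.coprime_iff_not_dvd hp).mpr hpm
  have : IsCoprime (p : ℤ) (m : ℤ) := Int.isCoprime_iff_gcd_eq_one.mpr (by
    simpa [Int.gcd_natCast_natCast] using hcop)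
  obtain ⟨a, b, hab⟩ := this
  have hK : (a : K) * p + (b : K) * m = 1 := by
    have := congrArg (fun z : ℤ => (z : K)) hab
    push_cast at this
    simpa using this
  have hub : ‖(m : K)‖ ≤ 1 := norm_natCast_le_one K m
  by_contra hne
  have hlt : ‖(m : K)‖ < 1 := lt_of_le_of_ne hub hne
  have h1 : (1 : ℝ) = ‖(a : K) * p + (b : K) * m‖ := by rw [hK, norm_one]
  have h2 : ‖(a : K) * p + (b : K) * m‖ ≤ max (‖(a : K)‖ * ‖(p : K)‖) (‖(b : K)‖ * ‖(m : K)‖) := by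
    refine le_trans (norm_add_le_max _ _) ?_
    simp [norm_mul]
  have hp1 : (1 : ℝ) < p := by exact_mod_cast hp.one_lt
  have ha : ‖(a : K)‖ ≤ 1 := norm_intCast_le_one K a
  have hb : ‖(b : K)‖ ≤ 1 := norm_intCast_le_one K b
  have hA : ‖(a : K)‖ * ‖(p : K)‖ < 1 := by
    rw [hpnorm]
    calc ‖(a : K)‖ * (p : ℝ)⁻¹ ≤ 1 * (p : ℝ)⁻¹ := by
          exact mul_le_mul_of_nonneg_right ha (by positivity)
      _ < 1 := by rw [one_mul]; exact inv_lt_one_of_one_lt₀ hp1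
  have hB : ‖(b : K)‖ * ‖(m : K)‖ < 1 := by
    calc ‖(b : K)‖ * ‖(m : K)‖ ≤ 1 * ‖(m : K)‖ :=
          mul_le_mul_of_nonneg_right hb (norm_nonneg _)
      _ < 1 := by rw [one_mul]; exact hlt
  have := h1.trans_le h2
  rcases max_cases (‖(a : K)‖ * ‖(p : K)‖) (‖(b : K)‖ * ‖(m : K)‖) with ⟨he, _⟩ | ⟨he, _⟩ <;>
    rw [he] at this <;> linarith

lemma tv_norm_nat_ge {p : ℕ} (hp : p.Prime) (hpnorm : ‖(p : K)‖ = (p : ℝ)⁻¹)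
    {n : ℕ} (hn : 0 < n) : 1 / (n : ℝ) ≤ ‖(n : K)‖ := by
  set v := n.factorization p with hv
  have hsplit : p ^ v * (n / p ^ v) = n := Nat.ordProj_mul_ordCompl_eq_self n p
  have hndvd : ¬ p ∣ (n / p ^ v) := Nat.not_dvd_ordCompl hp hn.ne'
  have hcop : ‖((n / p ^ v : ℕ) : K)‖ = 1 := tv_norm_coprime hp hpnorm hndvd
  have : ‖(n : K)‖ = ((p : ℝ)⁻¹) ^ v := by
    rw [← hsplit]
    push_cast
    rw [norm_mul, norm_pow, hpnorm, hcop, mul_one]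
  rw [this]
  have hp0 : (0 : ℝ) < p := by exact_mod_cast hp.pos
  have hle : (p : ℝ) ^ v ≤ n := by
    exact_mod_cast Nat.le_of_dvd hn (Nat.ordProj_dvd n p)
  rw [inv_pow, one_div]
  exact inv_anti₀ (by positivity) hle

/-- product of (1 - y) over nontrivial n-th roots of unity equals n -/
lemma tv_prod_one_sub [DecidableEq K] {n : ℕ} (hn : 0 < n) {η : K} (hη : IsPrimitiveRoot η n) :
    ∏ y ∈ (nthRootsFinset n (1 : K)).erase 1, (1 - y) = (n : K) := by
  have h1mem : (1 : K) ∈ nthRootsFinset n (1 : K) := (mem_nthRootsFinset hn (1 : K)).mpr (one_pow n)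
  have hfact : (X : K[X]) ^ n - 1 =
      (X - C 1) * ∏ y ∈ (nthRootsFinset n (1 : K)).erase 1, (X - C y) := by
    rw [X_pow_sub_one_eq_prod hn hη, ← Finset.mul_prod_erase _ _ h1mem]
  have hgeom : (X - C 1) * (∑ i ∈ Finset.range n, (X : K[X]) ^ i) = X ^ n - 1 := by
    have := geom_sum_mul (X : K[X]) n
    rw [mul_comm] at this
    simpa using this
  have hcancel : ∏ y ∈ (nthRootsFinset n (1 : K)).erase 1, ((X : K[X]) - C y)
      = ∑ i ∈ Finset.range n, (X : K[X]) ^ i := by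
    apply mul_left_cancel₀ (X_sub_C_ne_zero (1 : K))
    rw [hgeom, hfact]
  have := congrArg (Polynomial.eval (1 : K)) hcancel
  simpa [Polynomial.eval_prod, Polynomial.eval_finset_sum] using this

/-- separation: any nontrivial root of unity is at distance ≥ 1/2 from 1 -/
lemma tv_sep {p : ℕ} (hp : p.Prime) (hpnorm : ‖(p : K)‖ = (p : ℝ)⁻¹)
    {η : K} (hfin : IsOfFinOrder η) (hne : η ≠ 1) : (1 : ℝ) / 2 ≤ ‖1 - η‖ := by
  classical
  set n := orderOf η with hn
  have hn0 : 0 < n := hfin.orderOf_pos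
  have hn2 : 2 ≤ n := by
    have h1 : n ≠ 1 := fun h1 => hne (orderOf_eq_one_iff.mp (hn ▸ h1))
    omega
  have hprim : IsPrimitiveRoot η n := IsPrimitiveRoot.orderOf η
  have hnorm1 : ‖η‖ = 1 := tv_norm_finOrder hfin
  have hcard : ((nthRootsFinset n (1 : K)).erase 1).card = n - 1 := by
    rw [Finset.card_erase_of_mem ((mem_nthRootsFinset hn0 (1 : K)).mpr (one_pow n)),
      hprim.card_nthRootsFinset]
  -- each factor is at most ‖1 - η‖
  have hbound : ∀ y ∈ (nthRootsFinset n (1 : K)).erase 1, ‖1 - y‖ ≤ ‖1 - η‖ := by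
    intro y hy
    have hy' : y ^ n = 1 := (mem_nthRootsFinset hn0 (1 : K)).mp (Finset.mem_of_mem_erase hy)
    haveI : NeZero n := ⟨hn0.ne'⟩
    obtain ⟨t, _, rfl⟩ := hprim.eq_pow_of_pow_eq_one hy'
    exact tv_geom_bound hnorm1 t
  have hprodnorm : ‖(n : K)‖ = ∏ y ∈ (nthRootsFinset n (1 : K)).erase 1, ‖1 - y‖ := by
    rw [← tv_prod_one_sub hn0 hprim, norm_prod]
  have hle : ‖(n : K)‖ ≤ ‖1 - η‖ ^ (n - 1) := by
    rw [hprodnorm, ← hcard, ← Finset.prod_const]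
    exact Finset.prod_le_prod (fun y _ => norm_nonneg _) hbound
  have h2n : (n : ℝ) ≤ 2 ^ (n - 1) := by
    have : n - 1 < 2 ^ (n - 1) := Nat.lt_two_pow_self (n := n - 1)
    have h' : n ≤ 2 ^ (n - 1) := by omega
    exact_mod_cast h'
  have hkey : ((1 : ℝ) / 2) ^ (n - 1) ≤ ‖1 - η‖ ^ (n - 1) := by
    have hnn : 1 / (n : ℝ) ≤ ‖(n : K)‖ := tv_norm_nat_ge hp hpnorm hn0
    have hhalf : ((1 : ℝ) / 2) ^ (n - 1) ≤ 1 / (n : ℝ) := by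
      rw [div_pow, one_pow]
      exact one_div_le_one_div_of_le (by exact_mod_cast hn0) h2n
    linarith
  exact le_of_pow_le_pow_left₀ (by omega) (norm_nonneg _) hkey

/-- distinct roots of unity are at distance at least 1/2 -/
lemma tv_sep_dist {p : ℕ} (hp : p.Prime) (hpnorm : ‖(p : K)‖ = (p : ℝ)⁻¹)
    {ξ ξ0 : K} (hξ : IsOfFinOrder ξ) (hξ0 : IsOfFinOrder ξ0) (hne : ξ ≠ ξ0) :
    (1 : ℝ) / 2 ≤ ‖ξ - ξ0‖ := by
  set n0 := orderOf ξ0 with hn0def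
  have hn0 : 0 < n0 := hξ0.orderOf_pos
  set η := ξ * ξ0 ^ (n0 - 1) with hη
  have hmul : ξ0 * η = ξ := by
    rw [hη, mul_comm ξ, ← mul_assoc, ← pow_succ', Nat.sub_add_cancel hn0,
      pow_orderOf_eq_one, one_mul]
  have hfinη : IsOfFinOrder η := hξ.mul (hξ0.pow)
  have hηne : η ≠ 1 := by
    intro h1
    rw [h1, mul_one] at hmul
    exact hne hmul.symm
  have hfac : ξ - ξ0 = ξ0 * (η - 1) := by rw [mul_sub, hmul, mul_one]
  have : ‖ξ - ξ0‖ = ‖η - 1‖ := by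
    rw [hfac, norm_mul, tv_norm_finOrder hξ0, one_mul]
  rw [this, norm_sub_rev]
  exact tv_sep hp hpnorm hfinη hηne

/-- roots of unity do not accumulate at any point -/
lemma tv_pt {p : ℕ} (hp : p.Prime) (hpnorm : ‖(p : K)‖ = (p : ℝ)⁻¹) (r : K) :
    ∃ b : ℝ, 0 < b ∧ ∀ ξ : K, IsOfFinOrder ξ → ξ ≠ r → b ≤ ‖ξ - r‖ := by
  by_cases h : ∃ ξ0 : K, IsOfFinOrder ξ0 ∧ ‖ξ0 - r‖ < 1 / 4
  · obtain ⟨ξ0, hfin0, hclose⟩ := h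
    have key : ∀ ξ : K, IsOfFinOrder ξ → ξ ≠ ξ0 → (1 : ℝ) / 4 ≤ ‖ξ - r‖ := by
      intro ξ hξ hneξ0
      have h1 : (1 : ℝ) / 2 ≤ ‖ξ - ξ0‖ := tv_sep_dist hp hpnorm hξ hfin0 hneξ0
      have h2 : ‖ξ - ξ0‖ ≤ ‖ξ - r‖ + ‖ξ0 - r‖ := by
        have h3 := norm_sub_le_norm_sub_add_norm_sub ξ r ξ0
        rw [norm_sub_rev r ξ0] at h3
        exact h3
      linarith
    by_cases h0 : ξ0 = r
    · exact ⟨1 / 4, by norm_num, fun ξ hξ hne => key ξ hξ (by rw [h0]; exact hne)⟩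
    · refine ⟨min (1 / 4) ‖ξ0 - r‖, lt_min (by norm_num) (by
        exact norm_pos_iff.mpr (sub_ne_zero.mpr h0)), ?_⟩
      intro ξ hξ hne
      by_cases hξ0 : ξ = ξ0
      · rw [hξ0]; exact min_le_right _ _
      · exact le_trans (min_le_left _ _) (key ξ hξ hξ0)
  · push_neg at h
    exact ⟨1 / 4, by norm_num, fun ξ hξ _ => h ξ hξ⟩

lemma gaussNorm_nonneg (F : Polynomial K) : 0 ≤ gaussNorm F := NNReal.coe_nonneg _

lemma coeff_le_gaussNorm (F : Polynomial K) (i : ℕ) : ‖F.coeff i‖ ≤ gaussNorm F := by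
  by_cases hi : i ∈ F.support
  · exact_mod_cast NNReal.coe_le_coe.mpr (Finset.le_sup (f := fun i => ‖F.coeff i‖₊) hi)
  · rw [Polynomial.notMem_support_iff.mp hi]
    simpa using gaussNorm_nonneg F

lemma gaussNorm_pos {F : Polynomial K} (hF : F ≠ 0) : 0 < gaussNorm F := by
  have hex : ∃ i, F.coeff i ≠ 0 := by
    by_contra hc
    push_neg at hc
    exact hF (Polynomial.ext fun i => by simp [hc i])
  obtain ⟨i, hi⟩ := hex
  calc (0 : ℝ) < ‖F.coeff i‖ := norm_pos_iff.mpr hi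
    _ ≤ gaussNorm F := coeff_le_gaussNorm F i

/-- factorization bound: if `F(α) = 0` then `|F(x)| ≤ |x - α|·|F|` for `x, α` in the unit ball -/
lemma tv_eval_bound {F : Polynomial K} {α x : K} (hroot : F.eval α = 0)
    (hα : ‖α‖ ≤ 1) (hx : ‖x‖ ≤ 1) :
    ‖F.eval x‖ ≤ ‖x - α‖ * gaussNorm F := by
  classical
  set n := F.natDegree + 1 with hn
  have hevx : F.eval x = ∑ i ∈ Finset.range n, F.coeff i * x ^ i :=
    Polynomial.eval_eq_sum_range (p := F) x
  have hevα : (0 : K) = ∑ i ∈ Finset.range n, F.coeff i * α ^ i := by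
    rw [← hroot]; exact Polynomial.eval_eq_sum_range (p := F) α
  have hdiff : F.eval x =
      (∑ i ∈ Finset.range n, F.coeff i * ∑ j ∈ Finset.range i, x ^ j * α ^ (i - 1 - j)) * (x - α) := by
    rw [Finset.sum_mul]
    rw [hevx, ← sub_zero (∑ i ∈ Finset.range n, F.coeff i * x ^ i), hevα, ← Finset.sum_sub_distrib]
    refine Finset.sum_congr rfl fun i _ => ?_
    rw [mul_assoc, geom_sum₂_mul x α i, mul_sub]
  rw [hdiff, norm_mul, mul_comm]
  apply mul_le_mul_of_nonneg_left _ (norm_nonneg _)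
  refine norm_sum_le_of_forall_le_of_nonneg (gaussNorm_nonneg F) fun i _ => ?_
  rw [norm_mul]
  have hg : ‖∑ j ∈ Finset.range i, x ^ j * α ^ (i - 1 - j)‖ ≤ 1 := by
    refine norm_sum_le_of_forall_le_of_nonneg zero_le_one fun j _ => ?_
    rw [norm_mul, norm_pow, norm_pow]
    exact mul_le_one₀ (pow_le_one₀ (norm_nonneg x) hx) (by positivity)
      (pow_le_one₀ (norm_nonneg α) hα)
  calc ‖F.coeff i‖ * ‖∑ j ∈ Finset.range i, x ^ j * α ^ (i - 1 - j)‖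
      ≤ ‖F.coeff i‖ * 1 := mul_le_mul_of_nonneg_left hg (norm_nonneg _)
    _ = ‖F.coeff i‖ := mul_one _
    _ ≤ gaussNorm F := coeff_le_gaussNorm F i

lemma tv_multiset_prod_mono {s : Multiset K} {f g : K → ℝ}
    (h : ∀ r ∈ s, 0 ≤ f r ∧ f r ≤ g r) :
    0 ≤ (s.map f).prod ∧ (s.map f).prod ≤ (s.map g).prod := by
  induction s using Multiset.induction_on with
  | empty => simp
  | cons a t ih =>
    obtain ⟨ih1, ih2⟩ := ih fun r hr => h r (Multiset.mem_cons_of_mem hr)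
    obtain ⟨ha1, ha2⟩ := h a (Multiset.mem_cons_self a t)
    simp only [Multiset.map_cons, Multiset.prod_cons]
    constructor
    · exact mul_nonneg ha1 ih1
    · exact mul_le_mul ha2 ih2 ih1 (le_trans ha1 ha2)

lemma tv_inf_lower [IsAlgClosed K] {p : ℕ} (hp : p.Prime) (hpnorm : ‖(p : K)‖ = (p : ℝ)⁻¹)
    {F : Polynomial K} (hF : F ≠ 0) :
    ∃ b : ℝ, 0 < b ∧ ∀ ξ : K, IsOfFinOrder ξ → F.eval ξ ≠ 0 → b ≤ ‖F.eval ξ‖ := by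
  classical
  -- choose a lower bound function for distances to each point
  set B : K → ℝ := fun r => (tv_pt hp hpnorm r).choose with hB
  have hBpos : ∀ r : K, 0 < B r := fun r => (tv_pt hp hpnorm r).choose_spec.1
  have hBspec : ∀ r ξ : K, IsOfFinOrder ξ → ξ ≠ r → B r ≤ ‖ξ - r‖ :=
    fun r => (tv_pt hp hpnorm r).choose_spec.2
  set R : Multiset K := F.roots with hR
  have hsplit : C F.leadingCoeff * (R.map fun a => X - C a).prod = F :=
    C_leadingCoeff_mul_prod_multiset_X_sub_C
      (Polynomial.splits_iff_card_roots.mp (IsAlgClosed.splits F))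
  refine ⟨‖F.leadingCoeff‖ * (R.map B).prod, ?_, ?_⟩
  · apply mul_pos (norm_pos_iff.mpr (Polynomial.leadingCoeff_ne_zero.mpr hF))
    apply Multiset.prod_pos
    intro x hx
    obtain ⟨r, _, rfl⟩ := Multiset.mem_map.mp hx
    exact hBpos r
  · intro ξ hξ hξF
    have heval : F.eval ξ = F.leadingCoeff * (R.map fun a => ξ - a).prod := by
      conv_lhs => rw [← hsplit]
      rw [Polynomial.eval_mul, Polynomial.eval_C, Polynomial.eval_multiset_prod]
      congr 1
      rw [Multiset.map_map]
      congr 1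
      exact Multiset.map_congr rfl fun a _ => by
        simp [Function.comp, Polynomial.eval_sub]
    have hnorm : ‖F.eval ξ‖ = ‖F.leadingCoeff‖ * (R.map fun a => ‖ξ - a‖).prod := by
      rw [heval, norm_mul]
      congr 1
      induction R using Multiset.induction_on with
      | empty => simp
      | cons a t ih => simp [norm_mul, ih]
    rw [hnorm]
    apply mul_le_mul_of_nonneg_left _ (norm_nonneg _)
    have hprod := tv_multiset_prod_mono (s := R) (f := B) (g := fun a => ‖ξ - a‖) ?_
    · exact hprod.2
    · intro r hr
      refine ⟨(hBpos r).le, hBspec r ξ hξ ?_⟩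
      intro hrfl
      apply hξF
      rw [hrfl]
      exact Polynomial.isRoot_of_mem_roots hr

end TateVolochLemmas

open Polynomial IsUltrametricDist in
/-- Let `α ∈ ℂ_p` with `|α|_p = 1` be a root of the nonzero polynomial `F ∈ ℂ_p[X]`,
and let `ζ` be a root of unity of order `p^k·m` with `p ∤ m`.  Identifying
`Gal(ℚ(ζ)/ℚ)` with `(ZMod N)ˣ` (where `N = p^k·m`), let `M` be a nonempty subset with
`F(σ(ζ)) ≠ 0` for all `σ ∈ M`. Then
`0 ≥ Σ_{σ∈M} log|σ(ζ) - α|_p ≥ -(c(F) + k·log p)`. -/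
theorem stmt8 {p : ℕ} (hp : p.Prime)
    {K : Type*} [NontriviallyNormedField K] [IsUltrametricDist K] [IsAlgClosed K]
    [CompleteSpace K] (hpnorm : ‖(p : K)‖ = (p : ℝ)⁻¹)
    (F : Polynomial K) (hF : F ≠ 0) (α : K) (hα : ‖α‖ = 1) (hroot : F.eval α = 0)
    (k m N : ℕ) (hm : 0 < m) (hpm : ¬ p ∣ m) (hNval : N = p ^ k * m)
    (ζ : K) (hζ : orderOf ζ = N)
    (M : Finset (ZMod N)ˣ) (hM : M.Nonempty)
    (hvan : ∀ σ ∈ M, F.eval (ζ ^ ((σ : ZMod N).val)) ≠ 0) :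
    (∑ σ ∈ M, Real.log ‖ζ ^ ((σ : ZMod N).val) - α‖) ≤ 0 ∧
      -(cF F + k * Real.log p) ≤ ∑ σ ∈ M, Real.log ‖ζ ^ ((σ : ZMod N).val) - α‖ := by
  classical
  have hN0 : 0 < N := hNval ▸ Nat.mul_pos (pow_pos hp.pos k) hm
  haveI : NeZero N := ⟨hN0.ne'⟩
  have hfinζ : IsOfFinOrder ζ := by rw [← orderOf_pos_iff, hζ]; exact hN0
  have hζnorm : ‖ζ‖ = 1 := tv_norm_finOrder hfinζ
  have hζN : ζ ^ N = 1 := by rw [← hζ]; exact pow_orderOf_eq_one ζ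
  set f : (ZMod N)ˣ → K := fun σ => ζ ^ ((σ : ZMod N).val) with hf
  have hfnorm : ∀ σ, ‖f σ‖ = 1 := fun σ => by rw [hf, norm_pow, hζnorm, one_pow]
  have hffin : ∀ σ, IsOfFinOrder (f σ) := fun σ => hfinζ.pow
  have hfS : ∀ σ, f σ ∈ nthRootsFinset N (1 : K) := fun σ => by
    rw [mem_nthRootsFinset hN0, hf, ← pow_mul, mul_comm, pow_mul, hζN, one_pow]
  have hprim : IsPrimitiveRoot ζ N := hζ ▸ IsPrimitiveRoot.orderOf ζ
  have hfinj : ∀ σ τ : (ZMod N)ˣ, f σ = f τ → σ = τ := by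
    intro σ τ h
    have h' : ζ ^ ((σ : ZMod N).val) = ζ ^ ((τ : ZMod N).val) := h
    have := hprim.pow_inj (ZMod.val_lt _) (ZMod.val_lt _) h'
    exact Units.ext (ZMod.val_injective N this)
  have hub : ∀ σ ∈ M, ‖f σ - α‖ ≤ 1 := by
    intro σ _
    refine le_trans (tv_norm_sub_le_max _ _) ?_
    rw [hfnorm, hα, max_self]
  have htpos : ∀ σ ∈ M, 0 < ‖f σ - α‖ := by
    intro σ hσ
    refine norm_pos_iff.mpr (sub_ne_zero.mpr fun h => hvan σ hσ ?_)
    rw [show (ζ ^ ((σ : ZMod N).val)) = α from h]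
    exact hroot
  constructor
  · exact Finset.sum_nonpos fun σ hσ => Real.log_nonpos (norm_nonneg _) (hub σ hσ)
  -- lower bound
  obtain ⟨σ0, hσ0M, hσ0min⟩ := M.exists_min_image (fun σ => ‖f σ - α‖) hM
  set β : K := f σ0 with hβ
  have hβS : β ∈ nthRootsFinset N (1 : K) := hfS σ0
  have hβnorm : ‖β‖ = 1 := hfnorm σ0
  have hβne0 : β ≠ 0 := fun h => by simp [h] at hβnorm
  -- infF positivity
  have hsetne : {r : ℝ | ∃ ξ : K, IsOfFinOrder ξ ∧ F.eval ξ ≠ 0 ∧ r = ‖F.eval ξ‖}.Nonempty :=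
    ⟨‖F.eval β‖, β, hffin σ0, hvan σ0 hσ0M, rfl⟩
  obtain ⟨b, hb0, hbspec⟩ := tv_inf_lower hp hpnorm hF
  have hinfpos : 0 < infF F := by
    refine lt_of_lt_of_le hb0 (le_csInf hsetne ?_)
    rintro r ⟨ξ, hξ1, hξ2, rfl⟩
    exact hbspec ξ hξ1 hξ2
  have hbdd : BddBelow {r : ℝ | ∃ ξ : K, IsOfFinOrder ξ ∧ F.eval ξ ≠ 0 ∧ r = ‖F.eval ξ‖} :=
    ⟨0, by rintro r ⟨ξ, _, _, rfl⟩; exact norm_nonneg _⟩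
  -- step 1 : infF ≤ ‖β - α‖ * gaussNorm F
  have hstep1 : infF F ≤ ‖β - α‖ * gaussNorm F := by
    refine le_trans (csInf_le hbdd ⟨β, hffin σ0, hvan σ0 hσ0M, rfl⟩) ?_
    exact tv_eval_bound hroot hα.le (hβnorm.le)
  -- per-term bound on the erase
  have hstep3 : ∀ σ ∈ M.erase σ0, ‖f σ - β‖ ≤ ‖f σ - α‖ ∧ 0 < ‖f σ - β‖ := by
    intro σ hσ
    have hσM : σ ∈ M := Finset.mem_of_mem_erase hσ
    have hσne : σ ≠ σ0 := Finset.ne_of_mem_erase hσ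
    have hfne : f σ ≠ β := fun h => hσne (hfinj _ _ h)
    constructor
    · have h1 : f σ - β = (f σ - α) - (β - α) := by ring
      rw [h1]
      refine le_trans (tv_norm_sub_le_max _ _) ?_
      exact max_le le_rfl (hσ0min σ hσM)
    · exact norm_pos_iff.mpr (sub_ne_zero.mpr hfne)
  -- product over erase is at least the full product over nontrivial roots
  have himg : (M.erase σ0).image f ⊆ (nthRootsFinset N (1 : K)).erase β := by
    intro x hx
    obtain ⟨σ, hσ, rfl⟩ := Finset.mem_image.mp hx
    exact Finset.mem_erase.mpr ⟨fun h => (Finset.ne_of_mem_erase hσ) (hfinj _ _ h), hfS σ⟩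
  have hprodimg : ∏ σ ∈ M.erase σ0, ‖f σ - β‖ = ∏ x ∈ (M.erase σ0).image f, ‖x - β‖ := by
    rw [Finset.prod_image]
    intro σ hσ τ hτ h
    exact hfinj _ _ h
  have hstep5 : ∏ x ∈ (nthRootsFinset N (1 : K)).erase β, ‖x - β‖ ≤
      ∏ x ∈ (M.erase σ0).image f, ‖x - β‖ := by
    rw [← Finset.prod_sdiff himg]
    have h1 : ∏ x ∈ ((nthRootsFinset N (1 : K)).erase β) \ ((M.erase σ0).image f), ‖x - β‖ ≤ 1 := by
      refine Finset.prod_le_one (fun x _ => norm_nonneg _) ?_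
      intro x hx
      have hxS : x ∈ nthRootsFinset N (1 : K) :=
        Finset.mem_of_mem_erase (Finset.mem_sdiff.mp hx).1
      have hxnorm : ‖x‖ = 1 := by
        have hx1 : x ^ N = 1 := (mem_nthRootsFinset hN0 (1 : K)).mp hxS
        exact tv_norm_finOrder (isOfFinOrder_iff_pow_eq_one.mpr ⟨N, hN0, hx1⟩)
      refine le_trans (tv_norm_sub_le_max _ _) ?_
      rw [hxnorm, hβnorm, max_self]
    calc (∏ x ∈ ((nthRootsFinset N (1 : K)).erase β) \ ((M.erase σ0).image f), ‖x - β‖) *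
          ∏ x ∈ (M.erase σ0).image f, ‖x - β‖
        ≤ 1 * ∏ x ∈ (M.erase σ0).image f, ‖x - β‖ :=
          mul_le_mul_of_nonneg_right h1 (Finset.prod_nonneg fun x _ => norm_nonneg _)
      _ = _ := one_mul _
  -- change of variables x = β * y
  have hstep6 : ∏ x ∈ (nthRootsFinset N (1 : K)).erase β, ‖x - β‖ =
      ∏ y ∈ (nthRootsFinset N (1 : K)).erase 1, ‖y - 1‖ := by
    refine Finset.prod_bij' (fun x _ => β⁻¹ * x) (fun y _ => β * y) ?_ ?_ ?_ ?_ ?_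
    · intro x hx
      obtain ⟨hxne, hxS⟩ := Finset.mem_erase.mp hx
      refine Finset.mem_erase.mpr ⟨?_, ?_⟩
      · rw [Ne, inv_mul_eq_one₀ hβne0]
        exact fun h => hxne h.symm
      · rw [mem_nthRootsFinset hN0, mul_pow, inv_pow,
          (mem_nthRootsFinset hN0 (1 : K)).mp hxS, (mem_nthRootsFinset hN0 (1 : K)).mp hβS, inv_one, one_mul]
    · intro y hy
      obtain ⟨hyne, hyS⟩ := Finset.mem_erase.mp hy
      refine Finset.mem_erase.mpr ⟨?_, ?_⟩
      · intro h
        exact hyne (by field_simp at h; exact h)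
      · rw [mem_nthRootsFinset hN0, mul_pow,
          (mem_nthRootsFinset hN0 (1 : K)).mp hyS, (mem_nthRootsFinset hN0 (1 : K)).mp hβS, one_mul]
    · intro x hx
      field_simp
    · intro y hy
      field_simp
    · intro x hx
      have : x - β = β * (β⁻¹ * x - 1) := by field_simp
      rw [this, norm_mul, hβnorm, one_mul]
  have hstep7 : ∏ y ∈ (nthRootsFinset N (1 : K)).erase 1, ‖y - 1‖ = ‖(N : K)‖ := by
    rw [← tv_prod_one_sub hN0 hprim, norm_prod]
    exact Finset.prod_congr rfl fun y _ => (norm_sub_rev _ _)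
  have hstep8 : ‖(N : K)‖ = ((p : ℝ)⁻¹) ^ k := by
    rw [hNval]
    push_cast
    rw [norm_mul, norm_pow, hpnorm, tv_norm_coprime hp hpnorm hpm, mul_one]
  -- assemble the lower bound
  have herasepos : 0 < ∏ σ ∈ M.erase σ0, ‖f σ - β‖ :=
    Finset.prod_pos fun σ hσ => (hstep3 σ hσ).2
  have hchain : ((p : ℝ)⁻¹) ^ k ≤ ∏ σ ∈ M.erase σ0, ‖f σ - β‖ := by
    rw [← hstep8, ← hstep7, ← hstep6, hprodimg]
    exact hstep5
  have hlog2 : -(k * Real.log p) ≤ ∑ σ ∈ M.erase σ0, Real.log ‖f σ - α‖ := by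
    have h1 : ∑ σ ∈ M.erase σ0, Real.log ‖f σ - β‖ ≤
        ∑ σ ∈ M.erase σ0, Real.log ‖f σ - α‖ :=
      Finset.sum_le_sum fun σ hσ => Real.log_le_log (hstep3 σ hσ).2 (hstep3 σ hσ).1
    have h2 : Real.log (∏ σ ∈ M.erase σ0, ‖f σ - β‖) =
        ∑ σ ∈ M.erase σ0, Real.log ‖f σ - β‖ :=
      Real.log_prod fun σ hσ => ((hstep3 σ hσ).2).ne'
    have hp0 : (0 : ℝ) < p := by exact_mod_cast hp.pos
    have h3 : Real.log (((p : ℝ)⁻¹) ^ k) ≤ Real.log (∏ σ ∈ M.erase σ0, ‖f σ - β‖) :=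
      Real.log_le_log (pow_pos (inv_pos.mpr hp0) k) hchain
    have h4 : Real.log (((p : ℝ)⁻¹) ^ k) = -(k * Real.log p) := by
      rw [Real.log_pow, Real.log_inv]
      ring
    linarith
  have hlog1 : Real.log (infF F) - Real.log (gaussNorm F) ≤ Real.log ‖β - α‖ := by
    have h1 : Real.log (infF F) ≤ Real.log (‖β - α‖ * gaussNorm F) :=
      Real.log_le_log hinfpos hstep1
    rw [Real.log_mul (htpos σ0 hσ0M).ne' (gaussNorm_pos hF).ne'] at h1
    linarith
  have hsum : ∑ σ ∈ M, Real.log ‖f σ - α‖ =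
      Real.log ‖β - α‖ + ∑ σ ∈ M.erase σ0, Real.log ‖f σ - α‖ :=
    (Finset.add_sum_erase M _ hσ0M).symm
  have hcF : cF F = -(Real.log (infF F) - Real.log (gaussNorm F)) := by
    rw [cF, Real.log_div hinfpos.ne' (gaussNorm_pos hF).ne']
  have : -(cF F + k * Real.log p) ≤ ∑ σ ∈ M, Real.log ‖f σ - α‖ := by
    rw [hsum, hcF]
    linarith
  exact this
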